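/- For every l ≥ 1 the following identity holds in B: Z_l = Σ_{k=0}^{min(l,n)} (−1)^{l−k} Σ_{I ⊆ {1,…,n}, |I| = k} h_{l−k}(t_I)·∏_{j∈I} u_j v_j, where h_q(t_I) is the complete homogeneous symmetric polynomial of degree q in the variables {t_j : j ∈ I} (with h_0 = 1), and the product ∏_{j∈I} u_j v_j is taken in increasing order of j. -/

import Mathlib

open scoped BigOperators

set_option synthInstance.maxHeartbeats 1000000
set_option maxHeartbeats 1000000

noncomputable section

variable (R : Type) [CommRing R] (n : ℕ)

/-- The polynomial ring `R[t_1, …, t_n]`. -/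
abbrev Pn := MvPolynomial (Fin n) R

/-- `B`: the exterior algebra over `Pn` on the `2n` generators `u_1,…,u_n,v_1,…,v_n`. -/
abbrev Bn := ExteriorAlgebra (Pn R n) ((Fin n ⊕ Fin n) → Pn R n)

/-- The variable `t_i`. -/
def tv (i : Fin n) : Pn R n := MvPolynomial.X i

/-- The exterior generator `u_i`. -/
def uu (i : Fin n) : Bn R n := ExteriorAlgebra.ι (Pn R n) (Pi.single (Sum.inl i) 1)

/-- The exterior generator `v_i`. -/
def vv (i : Fin n) : Bn R n := ExteriorAlgebra.ι (Pn R n) (Pi.single (Sum.inr i) 1)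

/-- `X_l = ∑ t_i^(l-1) u_i` (indices `i` run over `Fin n`, `l ≥ 1`). -/
def Xel (l : ℕ) : Bn R n :=
  ∑ i : Fin n, algebraMap (Pn R n) (Bn R n) (tv R n i ^ (l - 1)) * uu R n i

/-- `Y_l = ∑ t_i^(l-1) v_i`. -/
def Yel (l : ℕ) : Bn R n :=
  ∑ i : Fin n, algebraMap (Pn R n) (Bn R n) (tv R n i ^ (l - 1)) * vv R n i

/-- `X_I`, the product of the `X_{i+1}` for `i ∈ I`, in increasing order. -/
def XI (I : Finset (Fin n)) : Bn R n := ((I.sort (· ≤ ·)).map fun i => Xel R n (i.1 + 1)).prod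

/-- `Y_I`, the product of the `Y_{i+1}` for `i ∈ I`, in increasing order. -/
def YI (I : Finset (Fin n)) : Bn R n := ((I.sort (· ≤ ·)).map fun i => Yel R n (i.1 + 1)).prod

/-- `(1 + p s)⁻¹ = ∑ (-p)^k s^k`, the inverse of `1 + p s` in `Pn[[s]]`. -/
def invOnePlus (p : Pn R n) : PowerSeries (Pn R n) := PowerSeries.mk fun k => (-p) ^ k

/-- The `i`-th factor `1 + s u_i v_i (1 + t_i s)⁻¹` of the power series defining the `Z_l`. -/
def Zfactor (i : Fin n) : PowerSeries (Bn R n) :=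
  1 + PowerSeries.C (uu R n i * vv R n i) *
    PowerSeries.map (algebraMap (Pn R n) (Bn R n)) (PowerSeries.X * invOnePlus R n (tv R n i))

/-- The power series `∏_{i=1}^n (1 + s u_i v_i (1 + t_i s)⁻¹) ∈ B[[s]]`. -/
def Zseries : PowerSeries (Bn R n) := ((List.finRange n).map (Zfactor R n)).prod

/-- `Z_l`, the coefficient of `s^l` in `Zseries`. -/
def Zel (l : ℕ) : Bn R n := PowerSeries.coeff l (Zseries R n)

/-- The Vandermonde matrix `V = (t_j^(i-1))`. -/
def Vmat : Matrix (Fin n) (Fin n) (Pn R n) := Matrix.of fun i j => tv R n j ^ (i : ℕ)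

/-- The Vandermonde determinant `Δ = det V = ∏_{i<j} (t_j - t_i)`. -/
def Dl : Pn R n := (Vmat R n).det


/-- The complete homogeneous symmetric polynomial of degree `q` in the variables
`{t_j : j ∈ I}`: the sum over all monomials of total degree `q` in those variables. -/
def hcomplete (I : Finset (Fin n)) (q : ℕ) : Pn R n :=
  ∑ m ∈ I.sym q, ((m : Multiset (Fin n)).map (tv R n)).prod

/-- The product `∏_{j ∈ I} u_j v_j`, taken in increasing order of `j`. -/
def uvProd (I : Finset (Fin n)) : Bn R n :=
  ((I.sort (· ≤ ·)).map fun j => uu R n j * vv R n j).prod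

section AuxCenter

variable {R : Type} [CommRing R] {n : ℕ}

lemma iota_anticomm (x y : (Fin n ⊕ Fin n) → Pn R n) :
    ExteriorAlgebra.ι (Pn R n) x * ExteriorAlgebra.ι (Pn R n) y
      = -(ExteriorAlgebra.ι (Pn R n) y * ExteriorAlgebra.ι (Pn R n) x) :=
  eq_neg_of_add_eq_zero_left (ExteriorAlgebra.ι_add_mul_swap x y)

lemma iota_mul_iota_central (x y m : (Fin n ⊕ Fin n) → Pn R n) :
    ExteriorAlgebra.ι (Pn R n) m *
        (ExteriorAlgebra.ι (Pn R n) x * ExteriorAlgebra.ι (Pn R n) y)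
      = (ExteriorAlgebra.ι (Pn R n) x * ExteriorAlgebra.ι (Pn R n) y) *
        ExteriorAlgebra.ι (Pn R n) m := by
  rw [← mul_assoc, iota_anticomm m x, neg_mul, mul_assoc, iota_anticomm m y, mul_neg, neg_neg,
    ← mul_assoc]

lemma uv_mem_center (i : Fin n) :
    uu R n i * vv R n i ∈ Subalgebra.center (Pn R n) (Bn R n) := by
  rw [Subalgebra.mem_center_iff]
  intro b
  induction b using ExteriorAlgebra.induction with
  | algebraMap r => exact Algebra.commutes r _
  | ι m => exact iota_mul_iota_central _ _ m
  | mul a b ha hb => rw [mul_assoc, hb, ← mul_assoc, ha, mul_assoc]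
  | add a b ha hb => rw [add_mul, ha, hb, mul_add]

end AuxCenter

section AuxH
variable {R : Type} [CommRing R] {n : ℕ}

lemma hcomplete_zero (I : Finset (Fin n)) : hcomplete R n I 0 = 1 := by
  simp only [hcomplete, Finset.sym_zero, Finset.sum_singleton]
  rfl

lemma hcomplete_empty_succ (q : ℕ) : hcomplete R n (∅ : Finset (Fin n)) (q+1) = 0 := by
  simp [hcomplete]

lemma hcomplete_rec (a : Fin n) (s : Finset (Fin n)) (ha : a ∉ s) (q : ℕ) :
    hcomplete R n (insert a s) (q+1)
      = hcomplete R n s (q+1) + tv R n a * hcomplete R n (insert a s) q := by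
  classical
  unfold hcomplete
  rw [← Finset.sum_filter_add_sum_filter_not ((insert a s).sym (q+1)) (fun m => a ∈ m)]
  have h1 : ((insert a s).sym (q+1)).filter (fun m => ¬ a ∈ m) = s.sym (q+1) := by
    ext m
    simp only [Finset.mem_filter, Finset.mem_sym_iff, Finset.mem_insert]
    constructor
    · rintro ⟨hmem, hnot⟩ b hb
      rcases hmem b hb with rfl | h
      · exact absurd hb hnot
      · exact h
    · intro h
      exact ⟨fun b hb => Or.inr (h b hb), fun hmem => ha (h a hmem)⟩
  have h2 : ∑ m ∈ ((insert a s).sym (q+1)).filter (fun m => a ∈ m),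
        ((m : Multiset (Fin n)).map (tv R n)).prod
      = tv R n a * ∑ m ∈ (insert a s).sym q, ((m : Multiset (Fin n)).map (tv R n)).prod := by
    rw [Finset.mul_sum]
    refine Finset.sum_bij' (fun m hm => m.erase a (Finset.mem_filter.mp hm).2)
      (fun m _ => a ::ₛ m) ?_ ?_ ?_ ?_ ?_
    · intro m hm
      rw [Finset.mem_sym_iff]
      intro b hb
      have hb2 : b ∈ (m : Multiset (Fin n)).erase a := by
        rwa [← Sym.coe_erase, Sym.mem_coe]
      exact Finset.mem_sym_iff.mp (Finset.mem_filter.mp hm).1 b (Multiset.mem_of_mem_erase hb2)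
    · intro m hm
      rw [Finset.mem_filter]
      refine ⟨Finset.mem_sym_iff.mpr fun b hb => ?_, Sym.mem_cons_self a m⟩
      rcases Sym.mem_cons.mp hb with rfl | h
      · exact Finset.mem_insert_self _ _
      · exact Finset.mem_sym_iff.mp hm b h
    · intro m hm
      exact Sym.cons_erase (Finset.mem_filter.mp hm).2
    · intro m hm
      exact Sym.erase_cons_head m a
    · intro m hm
      conv_lhs => rw [← Sym.cons_erase (Finset.mem_filter.mp hm).2]
      rw [Sym.coe_cons, Multiset.map_cons, Multiset.prod_cons]
  rw [h1, h2, add_comm]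

end AuxH

section AuxPS
variable {R : Type} [CommRing R] {n : ℕ}

/-- The generating series of the signed complete homogeneous symmetric polynomials. -/
def HSer (R : Type) [CommRing R] (n : ℕ) (I : Finset (Fin n)) : PowerSeries (Pn R n) :=
  PowerSeries.mk fun q => (-1) ^ q * hcomplete R n I q

lemma one_add_mul_invOnePlus (p : Pn R n) :
    (1 + PowerSeries.C p * PowerSeries.X) * invOnePlus R n p = 1 := by
  ext q
  rw [add_mul, one_mul, map_add, mul_assoc, PowerSeries.coeff_C_mul]
  cases q with
  | zero =>
    rw [PowerSeries.coeff_zero_X_mul]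
    simp [invOnePlus]
  | succ q =>
    rw [PowerSeries.coeff_succ_X_mul]
    simp only [invOnePlus, PowerSeries.coeff_mk, PowerSeries.coeff_one, Nat.succ_ne_zero,
      if_false, pow_succ]
    ring

lemma one_add_mul_HSer_insert (a : Fin n) (I : Finset (Fin n)) (ha : a ∉ I) :
    (1 + PowerSeries.C (tv R n a) * PowerSeries.X) * HSer R n (insert a I)
      = HSer R n I := by
  ext q
  rw [add_mul, one_mul, map_add, mul_assoc, PowerSeries.coeff_C_mul]
  cases q with
  | zero =>
    rw [PowerSeries.coeff_zero_X_mul]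
    simp [HSer, hcomplete_zero]
  | succ q =>
    rw [PowerSeries.coeff_succ_X_mul]
    simp only [HSer, PowerSeries.coeff_mk]
    rw [hcomplete_rec a I ha q]
    rw [pow_succ]
    ring

lemma invOnePlus_mul_HSer (a : Fin n) (I : Finset (Fin n)) (ha : a ∉ I) :
    invOnePlus R n (tv R n a) * HSer R n I = HSer R n (insert a I) := by
  calc invOnePlus R n (tv R n a) * HSer R n I
      = invOnePlus R n (tv R n a) *
        ((1 + PowerSeries.C (tv R n a) * PowerSeries.X) * HSer R n (insert a I)) := by
        rw [one_add_mul_HSer_insert a I ha]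
    _ = ((1 + PowerSeries.C (tv R n a) * PowerSeries.X) * invOnePlus R n (tv R n a)) *
        HSer R n (insert a I) := by ring
    _ = HSer R n (insert a I) := by rw [one_add_mul_invOnePlus, one_mul]

lemma prod_invOnePlus (I : Finset (Fin n)) :
    (∏ i ∈ I, invOnePlus R n (tv R n i)) = HSer R n I := by
  classical
  induction I using Finset.induction_on with
  | empty =>
    ext q
    cases q with
    | zero => simp [HSer, hcomplete_zero]
    | succ q => simp [HSer, hcomplete_empty_succ, PowerSeries.coeff_one]
  | insert _ _ ha ih =>
    rw [Finset.prod_insert ha, ih, invOnePlus_mul_HSer _ _ ha]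

end AuxPS

section AuxCtr
variable (R : Type) [CommRing R] (n : ℕ)

/-- The center of `Bn`, a commutative ring containing the scalars and the `u_i v_i`. -/
abbrev Cn := Subalgebra.center (Pn R n) (Bn R n)

/-- `u_i v_i` as an element of the center. -/
def wc (i : Fin n) : Cn R n := ⟨uu R n i * vv R n i, uv_mem_center i⟩

/-- The `i`-th `Z`-factor, as a power series over the center. -/
def Zcf (i : Fin n) : PowerSeries (Cn R n) :=
  1 + PowerSeries.C (wc R n i) *
    PowerSeries.map (algebraMap (Pn R n) (Cn R n)) (PowerSeries.X * invOnePlus R n (tv R n i))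

/-- The `Z`-series over the center. -/
def Zc : PowerSeries (Cn R n) := ∏ i : Fin n, Zcf R n i

/-- Inclusion of the center into `Bn`. -/
def ctrHom : Cn R n →+* Bn R n := (Subalgebra.val (Cn R n)).toRingHom

lemma ctrHom_algebraMap (p : Pn R n) :
    ctrHom R n (algebraMap (Pn R n) (Cn R n) p) = algebraMap (Pn R n) (Bn R n) p := rfl

lemma map_Zcf (i : Fin n) :
    PowerSeries.map (ctrHom R n) (Zcf R n i) = Zfactor R n i := by
  unfold Zcf Zfactor
  rw [map_add, map_one, map_mul, PowerSeries.map_C]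
  have hcomp : (PowerSeries.map (ctrHom R n)).comp
      (PowerSeries.map (algebraMap (Pn R n) (Cn R n)))
      = PowerSeries.map (algebraMap (Pn R n) (Bn R n)) := by
    rw [← PowerSeries.map_comp]
    congr 1
  have : PowerSeries.map (ctrHom R n)
      ((PowerSeries.map (algebraMap (Pn R n) (Cn R n))) (PowerSeries.X * invOnePlus R n (tv R n i)))
      = PowerSeries.map (algebraMap (Pn R n) (Bn R n)) (PowerSeries.X * invOnePlus R n (tv R n i)) := by
    rw [← hcomp]; rfl
  rw [this]
  rfl

lemma map_Zc : PowerSeries.map (ctrHom R n) (Zc R n) = Zseries R n := by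
  unfold Zc Zseries
  rw [Fin.prod_univ_def, map_list_prod, List.map_map]
  congr 1
  exact List.map_congr_left fun i _ => map_Zcf R n i

lemma ctrHom_prod_wc (I : Finset (Fin n)) :
    ctrHom R n (∏ i ∈ I, wc R n i) = uvProd R n I := by
  rw [Finset.prod_eq_multiset_prod, ← Finset.sort_eq I (· ≤ ·), Multiset.map_coe,
    Multiset.prod_coe, map_list_prod, List.map_map]
  rfl

lemma Zc_eq : Zc R n = ∑ I ∈ (Finset.univ : Finset (Fin n)).powerset,
    PowerSeries.C (∏ i ∈ I, wc R n i) *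
      PowerSeries.map (algebraMap (Pn R n) (Cn R n))
        (PowerSeries.X ^ I.card * HSer R n I) := by
  classical
  unfold Zc Zcf
  simp_rw [add_comm (1 : PowerSeries (Cn R n)) _]
  rw [Finset.prod_add]
  refine Finset.sum_congr rfl fun I _ => ?_
  rw [Finset.prod_const_one, mul_one, Finset.prod_mul_distrib, ← map_prod, ← map_prod,
    Finset.prod_mul_distrib, Finset.prod_const, prod_invOnePlus]

lemma Zel_eq_sum (l : ℕ) : Zel R n l = ∑ I ∈ (Finset.univ : Finset (Fin n)).powerset,
    uvProd R n I * algebraMap (Pn R n) (Bn R n)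
      (if I.card ≤ l then (-1) ^ (l - I.card) * hcomplete R n I (l - I.card) else 0) := by
  unfold Zel
  rw [← map_Zc, PowerSeries.coeff_map, Zc_eq, map_sum, map_sum]
  refine Finset.sum_congr rfl fun I _ => ?_
  rw [PowerSeries.coeff_C_mul, PowerSeries.coeff_map, map_mul, ctrHom_prod_wc,
    ctrHom_algebraMap, PowerSeries.coeff_X_pow_mul']
  congr 1
  split_ifs with h
  · simp [HSer]
  · simp

end AuxCtr

/-- The closed formula for `Z_l`:
`Z_l = ∑_{k=0}^{min(l,n)} (-1)^{l-k} ∑_{|I|=k} h_{l-k}(t_I)·∏_{j∈I} u_j v_j`. -/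
theorem Zel_eq_closed_formula (n : ℕ) (hn : 1 ≤ n) (l : ℕ) (hl : 1 ≤ l) :
    Zel ℤ n l = ∑ k ∈ Finset.range (min l n + 1), ((-1 : Bn ℤ n) ^ (l - k)) *
      ∑ I ∈ (Finset.univ.powersetCard k : Finset (Finset (Fin n))),
        algebraMap (Pn ℤ n) (Bn ℤ n) (hcomplete ℤ n I (l - k)) * uvProd ℤ n I := by
  classical
  rw [Zel_eq_sum ℤ n l, Finset.sum_powerset, Finset.card_univ, Fintype.card_fin]
  have hvan : ∀ j ∈ Finset.range (n + 1), j ∉ Finset.range (min l n + 1) →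
      (∑ I ∈ Finset.univ.powersetCard j, uvProd ℤ n I * algebraMap (Pn ℤ n) (Bn ℤ n)
        (if I.card ≤ l then (-1) ^ (l - I.card) * hcomplete ℤ n I (l - I.card) else 0)) = 0 := by
    intro j hj hj'
    have hjl : ¬ j ≤ l := by
      simp only [Finset.mem_range] at hj hj'; omega
    refine Finset.sum_eq_zero fun I hI => ?_
    have hcard : I.card = j := (Finset.mem_powersetCard.mp hI).2
    rw [hcard, if_neg hjl, map_zero, mul_zero]
  rw [← Finset.sum_subset (Finset.range_subset_range.mpr (by omega : min l n + 1 ≤ n + 1)) hvan]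
  refine Finset.sum_congr rfl fun k hk => ?_
  have hkl : k ≤ l := by simp only [Finset.mem_range] at hk; omega
  rw [Finset.mul_sum]
  refine Finset.sum_congr rfl fun I hI => ?_
  have hcard : I.card = k := (Finset.mem_powersetCard.mp hI).2
  rw [hcard, if_pos hkl, map_mul, map_pow, map_neg, map_one]
  have hc1 : Commute ((-1 : Bn ℤ n) ^ (l - k)) (uvProd ℤ n I) :=
    (Commute.neg_one_left _).pow_left _
  have hc2 : algebraMap (Pn ℤ n) (Bn ℤ n) (hcomplete ℤ n I (l - k)) * uvProd ℤ n I
      = uvProd ℤ n I * algebraMap (Pn ℤ n) (Bn ℤ n) (hcomplete ℤ n I (l - k)) :=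
    Algebra.commutes _ _
  rw [← mul_assoc, ← hc1.eq, mul_assoc, ← hc2]

end
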